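/- Let V be a finite-dimensional vector space over a field of characteristic zero. A nonzero element L of the second exterior power of V is decomposable (i.e. L = v ∧ w for some vectors v, w in V) if and only if L ∧ L = 0 in the fourth exterior power of V. -/

import Mathlib

open ExteriorAlgebra Pointwise

section Aux

variable {K V : Type*} [Field K] [CharZero K] [AddCommGroup V] [Module K V]

local notation "ιι" => ExteriorAlgebra.ι K (M := V)
local infixl:70 "⌋" => CliffordAlgebra.contractLeft (R := K) (M := V) (Q := 0)

lemma aux_delta (K : Type*) [Field K] (n : ℕ) (i j i0 j0 : Fin n) (h1 : i < j)
    (h2 : i0 < j0) :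
    (if i = i0 then (1:K) else 0) * (if j = j0 then 1 else 0)
      - (if j = i0 then 1 else 0) * (if i = j0 then 1 else 0)
      = if i = i0 ∧ j = j0 then 1 else 0 := by
  split_ifs <;> try ring
  all_goals exfalso
  all_goals simp only [Fin.ext_iff, Fin.lt_def, not_and] at *
  all_goals omega

lemma aux_anticomm (a b : V) : ιι a * ιι b = -(ιι b * ιι a) := by
  have h := CliffordAlgebra.ι_mul_ι_add_swap (Q := (0 : QuadraticForm K V)) a b
  have h2 : QuadraticMap.polar (0 : QuadraticForm K V) a b = 0 := by
    simp [QuadraticMap.polar]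
  rw [h2, map_zero] at h
  exact eq_neg_of_add_eq_zero_left h

lemma aux_pow_two_induction {P : ExteriorAlgebra K V → Prop} (T : ExteriorAlgebra K V)
    (hT : T ∈ ⋀[K]^2 V) (h0 : ∀ v w : V, P (ιι v * ιι w))
    (hadd : ∀ x y, P x → P y → P (x + y)) : P T := by
  rw [exteriorPower, pow_two] at hT
  refine Submodule.mul_induction_on hT ?_ hadd
  rintro m ⟨v, rfl⟩ n ⟨w, rfl⟩
  exact h0 v w

lemma aux_contract_ι_mul_ι (d : Module.Dual K V) (v w : V) :
    d⌋(ιι v * ιι w) = ιι (d v • w - d w • v) := by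
  rw [CliffordAlgebra.contractLeft_ι_mul, CliffordAlgebra.contractLeft_ι, map_sub, map_smul,
    map_smul, ← Algebra.commutes, ← Algebra.smul_def]

lemma aux_leibniz (d : Module.Dual K V) (T : ExteriorAlgebra K V) (hT : T ∈ ⋀[K]^2 V)
    (Z : ExteriorAlgebra K V) : d⌋(T * Z) = (d⌋T) * Z + T * (d⌋Z) := by
  refine aux_pow_two_induction
    (P := fun T => d⌋(T * Z) = (d⌋T) * Z + T * (d⌋Z)) T hT ?_ ?_
  · intro v w
    rw [mul_assoc, CliffordAlgebra.contractLeft_ι_mul, CliffordAlgebra.contractLeft_ι_mul,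
      aux_contract_ι_mul_ι, map_sub, map_smul]
    simp only [map_smul, mul_sub, sub_mul, smul_mul_assoc, mul_smul_comm, mul_assoc]
    abel
  · intro x y hx hy
    simp only [add_mul, map_add, hx, hy]
    abel

lemma aux_contract_mem (d : Module.Dual K V) (T : ExteriorAlgebra K V) (hT : T ∈ ⋀[K]^2 V) :
    ∃ u : V, d⌋T = ιι u := by
  refine aux_pow_two_induction (P := fun T => ∃ u : V, d⌋T = ιι u) T hT ?_ ?_
  · intro v w; exact ⟨d v • w - d w • v, aux_contract_ι_mul_ι d v w⟩
  · rintro x y ⟨u1, h1⟩ ⟨u2, h2⟩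
    exact ⟨u1 + u2, by rw [map_add, h1, h2, map_add]⟩

lemma aux_central (T : ExteriorAlgebra K V) (hT : T ∈ ⋀[K]^2 V) (v : V) :
    ιι v * T = T * ιι v := by
  refine aux_pow_two_induction (P := fun T => ιι v * T = T * ιι v) T hT ?_ ?_
  · intro x y
    rw [← mul_assoc, aux_anticomm v x, neg_mul, mul_assoc, aux_anticomm v y, mul_neg, neg_neg,
      mul_assoc]
  · intro x y hx hy; rw [mul_add, add_mul, hx, hy]

lemma aux_key (L : ExteriorAlgebra K V) (hL : L ∈ ⋀[K]^2 V) (hLL : L * L = 0)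
    (d ψ : Module.Dual K V) (u u' : V) (hu : d⌋L = ιι u) (hu' : ψ⌋L = ιι u') :
    ψ u • L = ιι u * ιι u' := by
  have h1 : ιι u * L + L * ιι u = 0 := by
    rw [← hu, ← aux_leibniz d L hL L, hLL, map_zero]
  have h2 : ιι u * L = 0 := by
    rw [← aux_central L hL u, ← two_smul K] at h1
    rcases smul_eq_zero.mp h1 with h | h
    · exact absurd h two_ne_zero
    · exact h
  have h4 := CliffordAlgebra.contractLeft_ι_mul (Q := (0 : QuadraticForm K V)) ψ u L
  rw [h2, map_zero, hu'] at h4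
  exact sub_eq_zero.mp h4.symm

end Aux

theorem stmt_0 (K V : Type*) [Field K] [CharZero K] [AddCommGroup V] [Module K V]
    [FiniteDimensional K V] (L : ExteriorAlgebra K V) (hL : L ∈ ⋀[K]^2 V) (hL0 : L ≠ 0) :
    (∃ v w : V, L = ExteriorAlgebra.ι K v * ExteriorAlgebra.ι K w) ↔ L * L = 0 := by
  constructor
  · rintro ⟨v, w, rfl⟩
    calc ι K v * ι K w * (ι K v * ι K w)
        = ι K v * (ι K w * ι K v * ι K w) := by noncomm_ring
      _ = ι K v * (-(ι K v * ι K w) * ι K w) := by rw [aux_anticomm]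
      _ = -(ι K v * ι K v * (ι K w * ι K w)) := by noncomm_ring
      _ = 0 := by rw [ι_sq_zero, zero_mul, neg_zero]
  · intro hLL
    -- set up a basis and a spanning family of ⋀² V
    set n := Module.finrank K V with hn
    let b : Module.Basis (Fin n) K V := Module.finBasis K V
    let P := {x : Fin n × Fin n // x.1 < x.2}
    let g : P → ExteriorAlgebra K V := fun p => ι K (b p.1.1) * ι K (b p.1.2)
    have hspan : L ∈ Submodule.span K (Set.range g) := by
      have hr : LinearMap.range (ι K : V →ₗ[K] ExteriorAlgebra K V)
          = Submodule.span K (Set.range fun i => ι K (b i)) := by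
        conv_lhs => rw [← Submodule.map_top, ← b.span_eq, Submodule.map_span, ← Set.range_comp]
        rfl
      have h2 : L ∈ Submodule.span K
          ((Set.range fun i => ι K (b i)) * (Set.range fun i => ι K (b i))) := by
        rw [← Submodule.span_mul_span]
        rw [exteriorPower, pow_two, hr] at hL
        exact hL
      refine Submodule.span_le.mpr ?_ h2
      rintro x hx
      rw [Set.mem_mul] at hx
      obtain ⟨a1, ⟨i, rfl⟩, a2, ⟨j, rfl⟩, rfl⟩ := hx
      rcases lt_trichotomy i j with h | h | h
      · exact Submodule.subset_span ⟨⟨(i, j), h⟩, rfl⟩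
      · subst h
        rw [ι_sq_zero]
        exact Submodule.zero_mem _
      · rw [aux_anticomm]
        exact Submodule.neg_mem _ (Submodule.subset_span ⟨⟨(j, i), h⟩, rfl⟩)
    obtain ⟨c, hc⟩ := (Finsupp.mem_span_range_iff_exists_finsupp).mp hspan
    have hcne : c ≠ 0 := by
      rintro rfl; simp at hc; exact hL0 hc.symm
    obtain ⟨p₀, hp₀⟩ := Finsupp.ne_iff.mp hcne
    simp only [Finsupp.coe_zero, Pi.zero_apply] at hp₀
    set d : Module.Dual K V := b.coord p₀.1.1 with hd
    set ψ : Module.Dual K V := b.coord p₀.1.2 with hψ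
    obtain ⟨u, hu⟩ := aux_contract_mem d L hL
    obtain ⟨u', hu'⟩ := aux_contract_mem ψ L hL
    have hψu : ψ u = c p₀ := by
      have key : CliffordAlgebra.contractLeft ψ (CliffordAlgebra.contractLeft d L)
          = algebraMap K _ (c p₀) := by
        have hterm : ∀ p : P, CliffordAlgebra.contractLeft ψ
            (CliffordAlgebra.contractLeft d (g p))
            = algebraMap K (ExteriorAlgebra K V) (if p = p₀ then 1 else 0) := by
          intro p
          show CliffordAlgebra.contractLeft ψ
            (CliffordAlgebra.contractLeft d (ι K (b p.1.1) * ι K (b p.1.2))) = _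
          rw [aux_contract_ι_mul_ι, CliffordAlgebra.contractLeft_ι]
          congr 1
          rw [map_sub, map_smul, map_smul, smul_eq_mul, smul_eq_mul]
          have hco : ∀ i i' : Fin n, b.coord i' (b i) = if i = i' then (1:K) else 0 := by
            intro i i'
            rw [Module.Basis.coord_apply, Module.Basis.repr_self, Finsupp.single_apply]
          rw [hd, hψ, hco, hco, hco, hco]
          have hpp : (p = p₀) ↔ (p.1.1 = p₀.1.1 ∧ p.1.2 = p₀.1.2) := by
            rw [Subtype.ext_iff, Prod.ext_iff]
          simp only [hpp]
          exact aux_delta K n p.1.1 p.1.2 p₀.1.1 p₀.1.2 p.2 p₀.2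
        rw [← hc, Finsupp.sum, map_sum, map_sum]
        simp only [map_smul, hterm, apply_ite (algebraMap K (ExteriorAlgebra K V)), map_one,
          map_zero, smul_ite, smul_zero]
        rw [Finset.sum_ite_eq' c.support p₀ fun x => c x • (1 : ExteriorAlgebra K V),
          if_pos (Finsupp.mem_support_iff.mpr hp₀), Algebra.algebraMap_eq_smul_one]
      rw [hu] at key
      rw [CliffordAlgebra.contractLeft_ι] at key
      exact (algebraMap K (ExteriorAlgebra K V)).injective key
    have hmain := aux_key L hL hLL d ψ u u' hu hu'
    refine ⟨(c p₀)⁻¹ • u, u', ?_⟩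
    rw [map_smul, smul_mul_assoc, ← hmain, hψu, smul_smul, inv_mul_cancel₀ hp₀, one_smul]
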